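/- Let 1 ∈ A ⊂ B be an inclusion of unital C*-algebras with a faithful conditional expectation E : B → A of index-finite type, with quasi-basis {(v_i, v_i*)}_{i=1}^n (i.e., every x ∈ B satisfies x = Σ_{i=1}^n E(xv_i)v_i* = Σ_{i=1}^n v_i E(v_i* x)). Then tsr(B) ≤ n · tsr(A). -/

import Mathlib

/-- `Lg R n` is the set of n-tuples generating `R` as a left ideal. -/
def Lg (R : Type*) [Ring R] (n : ℕ) : Set (Fin n → R) :=
  {b | ∃ c : Fin n → R, ∑ i, c i * b i = 1}

/-- Topological stable rank. -/
noncomputable def tsr (R : Type*) [Ring R] [TopologicalSpace R] : ℕ∞ :=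
  sInf {N : ℕ∞ | ∃ n : ℕ, (n : ℕ∞) = N ∧ Dense (Lg R n)}

/-- `E : B → B` is a conditional expectation onto the unital C*-subalgebra `A` of `B`:
it is an `A`-bimodule projection onto `A`, star-preserving and positive. -/
def IsCondExp {B : Type*} [CStarAlgebra B] (A : StarSubalgebra ℂ B) (E : B →ₗ[ℂ] B) : Prop :=
  (∀ b : B, E b ∈ A) ∧ (∀ a ∈ A, E a = a) ∧
  (∀ a ∈ A, ∀ b : B, ∀ c ∈ A, E (a * b * c) = a * E b * c) ∧
  (∀ b : B, E (star b) = star (E b)) ∧ (∀ b : B, ∃ x : B, E (star b * b) = star x * x)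

/-- `E` is faithful. -/
def IsFaithful {B : Type*} [CStarAlgebra B] (E : B →ₗ[ℂ] B) : Prop :=
  ∀ b : B, E (star b * b) = 0 → b = 0

/-- `{(vᵢ, vᵢ*)}` is a quasi-basis for `E`: every `x` satisfies
`x = ∑ vᵢ E(vᵢ* x) = ∑ E(x vᵢ) vᵢ*`.  In particular `E` is of index-finite type. -/
def IsQuasiBasis {B : Type*} [CStarAlgebra B] (E : B →ₗ[ℂ] B) {n : ℕ} (v : Fin n → B) : Prop :=
  ∀ b : B, (∑ i, v i * E (star (v i) * b)) = b ∧ (∑ i, E (b * v i) * star (v i)) = b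

/-!  Auxiliary material for the proof. -/

section DenseHelpers

variable {ι V : Type*} [Fintype ι] [PseudoMetricSpace V]

lemma dense_pi_elem {S : Set (ι → V)} (h : Dense S) (x : ι → V) {ε : ℝ} (hε : 0 < ε) :
    ∃ y ∈ S, ∀ i, dist (y i) (x i) < ε := by
  obtain ⟨y, hyb, hyS⟩ := Metric.dense_iff.mp h x ε hε
  exact ⟨y, hyS, fun i => (dist_pi_lt_iff hε).mp (Metric.mem_ball.mp hyb) i⟩

lemma dense_of_pi_elem {S : Set (ι → V)}
    (h : ∀ x : ι → V, ∀ ε : ℝ, 0 < ε → ∃ y ∈ S, ∀ i, dist (y i) (x i) < ε) : Dense S := by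
  rw [Metric.dense_iff]
  intro x ε hε
  obtain ⟨y, hyS, hy⟩ := h x ε hε
  exact ⟨y, Metric.mem_ball.mpr ((dist_pi_lt_iff hε).mpr hy), hyS⟩

lemma dense_pi_pi_elem {κ : Type*} [Fintype κ] {S : Set (ι → κ → V)} (h : Dense S)
    (x : ι → κ → V) {ε : ℝ} (hε : 0 < ε) :
    ∃ y ∈ S, ∀ i j, dist (y i j) (x i j) < ε := by
  obtain ⟨y, hyS, hy⟩ := dense_pi_elem h x hε
  exact ⟨y, hyS, fun i => (dist_pi_lt_iff hε).mp (hy i)⟩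

end DenseHelpers

section GenLemma

variable {R : Type*} [Ring R] [PseudoMetricSpace R]

/-- `Y` generates `R^n` as a left `R`-module. -/
def GenM {ι : Type*} [Fintype ι] {n : ℕ} (Y : ι → Fin n → R) : Prop :=
  ∀ t : Fin n → R, ∃ a : ι → R, ∀ j, ∑ k, a k * Y k j = t j

/-- Rieffel-style genericity: if `m`-tuples generating `R` as a left ideal are dense,
then `(n·m)`-tuples of rows generating the free module `R^n` are dense. -/
lemma genM_dense (hdist : ∀ x y c : R, dist (x + c) (y + c) = dist x y) {m : ℕ}
    (hm : ∀ (t : Fin m → R) (ε : ℝ), 0 < ε →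
      ∃ t' a : Fin m → R, (∑ k, a k * t' k = 1) ∧ ∀ k, dist (t' k) (t k) < ε) :
    ∀ n : ℕ, ∀ Y : Fin n × Fin m → Fin n → R, ∀ ε : ℝ, 0 < ε →
      ∃ Y', GenM Y' ∧ ∀ q j, dist (Y' q j) (Y q j) < ε := by
  intro n
  induction n with
  | zero =>
    intro Y ε hε
    refine ⟨Y, fun t => ⟨0, fun j => j.elim0⟩, fun q j => by simpa using hε⟩
  | succ n ih =>
    intro Y ε hε
    obtain ⟨t', a, hta, htd⟩ := hm (fun k => Y (0, k) 0) ε hε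
    set Y0 : Fin m → Fin (n + 1) → R :=
      fun k => Fin.cons (t' k) (fun j => Y (0, k) j.succ) with hY0
    set r : Fin (n + 1) → R := fun j => ∑ k, a k * Y0 k j with hr
    have hr0 : r 0 = 1 := by
      simp only [hr, hY0, Fin.cons_zero]
      exact hta
    set Z : Fin n × Fin m → Fin n → R :=
      fun p j => Y (p.1.succ, p.2) j.succ - Y (p.1.succ, p.2) 0 * r j.succ with hZ
    obtain ⟨Z', hZgen, hZd⟩ := ih Z ε hε
    refine ⟨fun q => Fin.cases (motive := fun _ => Fin (n + 1) → R) (Y0 q.2)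
        (fun i => Fin.cons (Y (i.succ, q.2) 0)
          (fun j => Z' (i, q.2) j + Y (i.succ, q.2) 0 * r j.succ)) q.1, ?_, ?_⟩
    · -- generation
      intro t
      obtain ⟨b, hb⟩ := hZgen (fun j => t j.succ - t 0 * r j.succ)
      set s₀ : R := ∑ p : Fin n × Fin m, b p * Y (p.1.succ, p.2) 0 with hs₀
      refine ⟨fun q => Fin.cases (motive := fun _ => R)
          ((t 0 - s₀) * a q.2) (fun i => b (i, q.2)) q.1, ?_⟩
      intro j
      rw [Fintype.sum_prod_type, Fin.sum_univ_succ]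
      refine Fin.cases ?_ ?_ j
      · -- coordinate 0
        simp only [Fin.cases_zero, Fin.cases_succ, Fin.cons_zero, hY0]
        have h1 : ∀ k, ((t 0 - s₀) * a k) * t' k = (t 0 - s₀) * (a k * t' k) := by
          intro k; rw [mul_assoc]
        calc (∑ k, ((t 0 - s₀) * a k) * t' k)
              + ∑ i : Fin n, ∑ k, b (i, k) * Y (i.succ, k) 0
            = (t 0 - s₀) * (∑ k, a k * t' k)
              + ∑ p : Fin n × Fin m, b p * Y (p.1.succ, p.2) 0 := by
              rw [Fintype.sum_prod_type, Finset.mul_sum]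
              congr 1
              exact Finset.sum_congr rfl (fun k _ => h1 k)
          _ = (t 0 - s₀) * 1 + s₀ := by rw [hta, hs₀]
          _ = t 0 := by rw [mul_one, sub_add_cancel]
      · -- coordinate j.succ
        intro j
        simp only [Fin.cases_zero, Fin.cases_succ, Fin.cons_succ]
        have h1 : ∀ k, ((t 0 - s₀) * a k) * Y0 k j.succ
            = (t 0 - s₀) * (a k * Y0 k j.succ) := fun k => mul_assoc _ _ _
        have h2 : (∑ k, ((t 0 - s₀) * a k) * Y0 k j.succ) = (t 0 - s₀) * r j.succ := by
          rw [hr, Finset.mul_sum]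
          exact Finset.sum_congr rfl (fun k _ => h1 k)
        have h3 : ∀ (i : Fin n) (k : Fin m),
            b (i, k) * (Z' (i, k) j + Y (i.succ, k) 0 * r j.succ)
            = b (i, k) * Z' (i, k) j + (b (i, k) * Y (i.succ, k) 0) * r j.succ := by
          intro i k; rw [mul_add, mul_assoc]
        calc (∑ k, ((t 0 - s₀) * a k) * Y0 k j.succ)
              + ∑ i : Fin n, ∑ k, b (i, k) * (Z' (i, k) j + Y (i.succ, k) 0 * r j.succ)
            = (t 0 - s₀) * r j.succ
              + ((∑ i : Fin n, ∑ k : Fin m, b (i, k) * Z' (i, k) j)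
                + (∑ i : Fin n, ∑ k : Fin m, b (i, k) * Y (i.succ, k) 0) * r j.succ) := by
              rw [h2]
              congr 1
              rw [Finset.sum_mul, ← Finset.sum_add_distrib]
              refine Finset.sum_congr rfl (fun i _ => ?_)
              rw [Finset.sum_mul, ← Finset.sum_add_distrib]
              exact Finset.sum_congr rfl (fun k _ => h3 i k)
          _ = (t 0 - s₀) * r j.succ + ((t j.succ - t 0 * r j.succ) + s₀ * r j.succ) := by
              have e1 : (∑ i : Fin n, ∑ k : Fin m, b (i, k) * Z' (i, k) j)
                  = ∑ p : Fin n × Fin m, b p * Z' p j :=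
                (Fintype.sum_prod_type (f := fun p : Fin n × Fin m => b p * Z' p j)).symm
              have e2 : (∑ i : Fin n, ∑ k : Fin m, b (i, k) * Y (i.succ, k) 0)
                  = ∑ p : Fin n × Fin m, b p * Y (p.1.succ, p.2) 0 :=
                (Fintype.sum_prod_type
                  (f := fun p : Fin n × Fin m => b p * Y (p.1.succ, p.2) 0)).symm
              rw [e1, e2, hb j, ← hs₀]
          _ = t j.succ := by rw [sub_mul]; abel
    · -- distances
      rintro ⟨i, k⟩ j
      refine Fin.cases (motive := fun i => ∀ k,
          dist ((Fin.cases (motive := fun _ => Fin (n + 1) → R) (Y0 k)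
            (fun i' => Fin.cons (Y (i'.succ, k) 0)
              (fun j' => Z' (i', k) j' + Y (i'.succ, k) 0 * r j'.succ)) i) j)
          (Y (i, k) j) < ε) ?_ ?_ i k
      · intro k
        simp only [Fin.cases_zero]
        refine Fin.cases ?_ ?_ j
        · simpa only [hY0, Fin.cons_zero] using htd k
        · intro j'
          simp only [hY0, Fin.cons_succ, dist_self]
          exact hε
      · intro i' k
        simp only [Fin.cases_succ]
        refine Fin.cases ?_ ?_ j
        · simp only [Fin.cons_zero, dist_self]
          exact hε
        · intro j'
          simp only [Fin.cons_succ]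
          have hYval : Y (i'.succ, k) j'.succ
              = Z (i', k) j' + Y (i'.succ, k) 0 * r j'.succ := by
            rw [hZ]; simp [sub_add_cancel]
          rw [hYval, hdist]
          exact hZd (i', k) j'
end GenLemma

section MainLemma

variable {B : Type*} [CStarAlgebra B]

lemma quasiBasis_dense_lg (A : StarSubalgebra ℂ B) (E : B →ₗ[ℂ] B) (hE : IsCondExp A E)
    {n : ℕ} (v : Fin n → B) (hv : IsQuasiBasis E v) {m : ℕ} (hm : Dense (Lg A m)) :
    Dense (Lg B (n * m)) := by
  classical
  obtain ⟨hEmem, hEfix, hEbimod, hEstar, hEpos⟩ := hE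
  have hdist : ∀ x y c : ↥A, dist (x + c) (y + c) = dist x y := by
    intro x y c
    rw [Subtype.dist_eq, Subtype.dist_eq]
    push_cast
    exact dist_add_right _ _ _
  have hm' : ∀ (t : Fin m → ↥A) (ε : ℝ), 0 < ε →
      ∃ t' a : Fin m → ↥A, (∑ k, a k * t' k = 1) ∧ ∀ k, dist (t' k) (t k) < ε := by
    intro t ε hε
    obtain ⟨t', ht'S, ht'd⟩ := dense_pi_elem hm t hε
    obtain ⟨a, ha⟩ := ht'S
    exact ⟨t', a, ha, ht'd⟩
  -- the index equivalence
  let e : Fin n × Fin m ≃ Fin (n * m) := finProdFinEquiv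
  apply dense_of_pi_elem
  intro x ε hε
  set C : ℝ := (∑ j, ‖v j‖) + 1 with hC
  have hCpos : 0 < C := by
    have : (0 : ℝ) ≤ ∑ j, ‖v j‖ := Finset.sum_nonneg (fun j _ => norm_nonneg _)
    linarith
  set δ : ℝ := ε / C with hδ
  have hδpos : 0 < δ := div_pos hε hCpos
  -- coefficient rows
  set rr : Fin n × Fin m → Fin n → ↥A :=
    fun q j => ⟨E (x (e q) * v j), hEmem _⟩ with hrr
  obtain ⟨r', hr'gen, hr'd⟩ := genM_dense hdist hm' n rr δ hδpos
  set x' : Fin (n * m) → B := fun k => ∑ j, ((r' (e.symm k) j : B) * star (v j)) with hx'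
  refine ⟨x', ?_, ?_⟩
  · -- x' generates B as a left ideal
    obtain ⟨a, ha⟩ := hr'gen (fun j => ⟨E (v j), hEmem _⟩)
    refine ⟨fun k => (a (e.symm k) : B), ?_⟩
    have key : ∀ j, ∑ k, ((a (e.symm k) : B) * (r' (e.symm k) j : B)) = E (v j) := by
      intro j
      have := ha j
      have hcast : ((∑ q, a q * r' q j : ↥A) : B) = ((⟨E (v j), hEmem _⟩ : ↥A) : B) := by
        rw [this]
      push_cast at hcast
      rw [← hcast]
      rw [← Equiv.sum_comp e.symm (fun q => ((a q : B) * (r' q j : B)))]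
    calc ∑ k, (a (e.symm k) : B) * x' k
        = ∑ k, ∑ j, ((a (e.symm k) : B) * (r' (e.symm k) j : B)) * star (v j) := by
          refine Finset.sum_congr rfl (fun k _ => ?_)
          rw [hx', Finset.mul_sum]
          exact Finset.sum_congr rfl (fun j _ => (mul_assoc _ _ _).symm)
      _ = ∑ j, (∑ k, ((a (e.symm k) : B) * (r' (e.symm k) j : B))) * star (v j) := by
          rw [Finset.sum_comm]
          exact Finset.sum_congr rfl (fun j _ => (Finset.sum_mul _ _ _).symm)
      _ = ∑ j, E (v j) * star (v j) := by
          exact Finset.sum_congr rfl (fun j _ => by rw [key j])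
      _ = 1 := by
          have := (hv 1).2
          simpa only [one_mul] using this
  · -- x' is close to x
    intro k
    have hxk : x k = ∑ j, E (x k * v j) * star (v j) := ((hv (x k)).2).symm
    have hrrval : ∀ j, ((rr (e.symm k) j : B)) = E (x k * v j) := by
      intro j
      simp only [hrr]
      rw [Equiv.apply_symm_apply]
    have hdiff : x' k - x k = ∑ j, ((r' (e.symm k) j : B) - (rr (e.symm k) j : B)) * star (v j) := by
      rw [hx', hxk, ← Finset.sum_sub_distrib]
      refine Finset.sum_congr rfl (fun j _ => ?_)
      rw [hrrval j, sub_mul]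
    have hbound : dist (x' k) (x k) ≤ ∑ j, δ * ‖v j‖ := by
      rw [dist_eq_norm, hdiff]
      refine le_trans (norm_sum_le _ _) (Finset.sum_le_sum (fun j _ => ?_))
      refine le_trans (norm_mul_le _ _) ?_
      rw [norm_star]
      have h1 : ‖(r' (e.symm k) j : B) - (rr (e.symm k) j : B)‖ ≤ δ := by
        have := hr'd (e.symm k) j
        rw [Subtype.dist_eq, dist_eq_norm] at this
        exact le_of_lt this
      exact mul_le_mul_of_nonneg_right h1 (norm_nonneg _)
    have hlast : ∑ j, δ * ‖v j‖ < ε := by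
      have h2 : (∑ j, ‖v j‖) < C := by rw [hC]; linarith
      calc ∑ j, δ * ‖v j‖ = δ * ∑ j, ‖v j‖ := by rw [Finset.mul_sum]
        _ < δ * C := mul_lt_mul_of_pos_left h2 hδpos
        _ = ε := by rw [hδ]; exact div_mul_cancel₀ ε (ne_of_gt hCpos)
    exact lt_of_le_of_lt hbound hlast

end MainLemma

/-- If `E : B → A` is a faithful conditional expectation of index-finite
type with an `n`-element quasi-basis `{(vᵢ, vᵢ*)}`, then `tsr B ≤ n · tsr A`. -/
theorem stmt_4 {B : Type*} [CStarAlgebra B] (A : StarSubalgebra ℂ B) (E : B →ₗ[ℂ] B)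
    (hE : IsCondExp A E) (hf : IsFaithful E) {n : ℕ} (v : Fin n → B)
    (hv : IsQuasiBasis E v) :
    tsr B ≤ (n : ℕ∞) * tsr A := by
  classical
  by_cases hT : ∃ m : ℕ, Dense (Lg A m)
  · obtain ⟨m₁, hm₁⟩ := hT
    have hTne : {k : ℕ | Dense (Lg A k)}.Nonempty := ⟨m₁, hm₁⟩
    have hmem : sInf {k : ℕ | Dense (Lg A k)} ∈ {k : ℕ | Dense (Lg A k)} := Nat.sInf_mem hTne
    set m₀ := sInf {k : ℕ | Dense (Lg A k)} with hm₀
    have htsrA : tsr A = (m₀ : ℕ∞) := by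
      apply le_antisymm
      · exact sInf_le ⟨m₀, rfl, hmem⟩
      · apply le_sInf
        rintro N ⟨k, rfl, hk⟩
        exact_mod_cast Nat.sInf_le hk
    have hB : Dense (Lg B (n * m₀)) := quasiBasis_dense_lg A E hE v hv hmem
    calc tsr B ≤ ((n * m₀ : ℕ) : ℕ∞) := sInf_le ⟨n * m₀, rfl, hB⟩
      _ = (n : ℕ∞) * tsr A := by rw [htsrA]; push_cast; ring
  · have htsrA : tsr A = ⊤ := by
      rw [tsr]
      convert (sInf_empty : sInf (∅ : Set ℕ∞) = ⊤)
      · rfl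
      rw [Set.eq_empty_iff_forall_notMem]
      rintro N ⟨k, rfl, hk⟩
      exact hT ⟨k, hk⟩
    rcases Nat.eq_zero_or_pos n with hn | hn
    · subst hn
      have h1 : (0 : B) = 1 := by simpa using (hv 1).2
      have h0 : Dense (Lg B 0) := by
        have huniv : Lg B 0 = Set.univ := by
          ext b
          simp only [Lg, Set.mem_setOf_eq, Set.mem_univ, iff_true]
          exact ⟨fun _ => 0, by simpa using h1⟩
        rw [huniv]
        exact dense_univ
      have hle : tsr B ≤ ((0 : ℕ) : ℕ∞) := sInf_le ⟨0, rfl, h0⟩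
      simpa using hle
    · rw [htsrA]
      have hne : ((n : ℕ∞)) ≠ 0 := by exact_mod_cast hn.ne'
      rw [ENat.mul_top hne]
      exact le_top
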